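/- For every real algebraic number ζ, there exists a point configuration C(ζ) in ℝ² that contains the point ζe₁ = (ζ, 0) and the set Q² + 𝟏 = {0, 1, 2}², and that is framed by Q² + 𝟏. -/

import Mathlib

open scoped RealInnerProductSpace

noncomputable section

/-- `ℝ^n` with the Euclidean norm. -/
abbrev ESp (n : ℕ) := EuclideanSpace ℝ (Fin n)

/-- A polytope is the convex hull of a finite set of points. -/
def IsPolytope {n : ℕ} (P : Set (ESp n)) : Prop :=
  ∃ V : Finset (ESp n), P = convexHull ℝ (V : Set (ESp n))

/-- The vertex set `F₀(P)` of a polytope: its extreme points. -/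
def verts {n : ℕ} (P : Set (ESp n)) : Set (ESp n) := Set.extremePoints ℝ P

/-- The dimension of a polytope: the dimension of its affine hull. -/
def polyDim {n : ℕ} (P : Set (ESp n)) : ℕ :=
  Module.finrank ℝ (affineSpan ℝ P).direction

/-- The faces of a polytope `P` are `∅`, `P`, and the intersections of `P` with a
hyperplane having `P` in one of its closed sides. -/
def IsFaceOf {n : ℕ} (P F : Set (ESp n)) : Prop :=
  F = ∅ ∨ F = P ∨ ∃ (c : ESp n) (a : ℝ), c ≠ 0 ∧ (∀ x ∈ P, ⟪c, x⟫ ≤ a) ∧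
    F = {x ∈ P | ⟪c, x⟫ = a}

/-- Denominator `⟨c, x⟩ + δ` of the projective map given by an `(n+1)×(n+1)` matrix `M`
(the last row of `M` is `(c, δ)`). -/
def projDen {n : ℕ} (M : Matrix (Fin (n + 1)) (Fin (n + 1)) ℝ) (x : ESp n) : ℝ :=
  (∑ j, M (Fin.last n) j.castSucc * x j) + M (Fin.last n) (Fin.last n)

/-- The projective transformation `x ↦ (Ax + b)/(⟨c, x⟩ + δ)` given by the
`(n+1)×(n+1)` matrix `M` with blocks `A, b, c, δ`. -/
def projApp {n : ℕ} (M : Matrix (Fin (n + 1)) (Fin (n + 1)) ℝ) (x : ESp n) : ESp n :=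
  WithLp.toLp 2 fun i => ((∑ j, M i.castSucc j.castSucc * x j) + M i.castSucc (Fin.last n)) / projDen M x

/-- Two sets are projectively equivalent if some projective transformation (given by an
invertible matrix), defined at every point of the first set, maps it bijectively onto the
second one. -/
def ProjEquiv {n : ℕ} (S T : Set (ESp n)) : Prop :=
  ∃ M : Matrix (Fin (n + 1)) (Fin (n + 1)) ℝ, IsUnit M.det ∧
    (∀ x ∈ S, projDen M x ≠ 0) ∧ Set.BijOn (projApp M) S T

/-- `S` is the vertex set of some face of `P`. -/
def IsVertexSetOfFace {n : ℕ} (P S : Set (ESp n)) : Prop :=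
  ∃ F, IsFaceOf P F ∧ verts F = S

/-- Combinatorial equivalence of two polytopes under a vertex bijection `φ`. -/
def CombEquivUnder {n : ℕ} (P P' : Set (ESp n)) (φ : ESp n → ESp n) : Prop :=
  Set.BijOn φ (verts P) (verts P') ∧
  ∀ S ⊆ verts P, IsVertexSetOfFace P S ↔ IsVertexSetOfFace P' (φ '' S)

/-- A polytope `P ⊆ ℝ^n` is projectively unique if every combinatorial equivalence of `P`
with a polytope `P'` in `ℝ^n` agrees on the vertices with a projective transformation
defined at all points of `P` and mapping `P` onto `P'`. -/
def ProjUniquePolytope {n : ℕ} (P : Set (ESp n)) : Prop :=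
  IsPolytope P ∧ ∀ (P' : Set (ESp n)) (φ : ESp n → ESp n),
    IsPolytope P' → CombEquivUnder P P' φ →
    ∃ M : Matrix (Fin (n + 1)) (Fin (n + 1)) ℝ, IsUnit M.det ∧
      (∀ x ∈ P, projDen M x ≠ 0) ∧ (∀ w ∈ verts P, projApp M w = φ w) ∧
      Set.BijOn (projApp M) P P'

/-- The standard coordinate embedding `ℝ^d ⊆ ℝ^n` for `d ≤ n`. -/
def coordEmbed {d n : ℕ} (_h : d ≤ n) (x : ESp d) : ESp n :=
  WithLp.toLp 2 fun i => if h' : (i : ℕ) < d then x ⟨i, h'⟩ else 0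

/-- Lawrence equivalence of two point configurations under a bijection `φ`:
for every oriented hyperplane `H` there is an oriented hyperplane `H'` with
`φ(R ∩ H₊) = R' ∩ H'₊` and `φ(R ∩ H₋) = R' ∩ H'₋`. -/
def LawrenceEquivConfig {n : ℕ} (R R' : Set (ESp n)) (φ : ESp n → ESp n) : Prop :=
  Set.BijOn φ R R' ∧
  ∀ (c : ESp n) (a : ℝ), c ≠ 0 →
    ∃ (c' : ESp n) (a' : ℝ), c' ≠ 0 ∧
      φ '' (R ∩ {x | a < ⟪c, x⟫}) = R' ∩ {x | a' < ⟪c', x⟫} ∧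
      φ '' (R ∩ {x | ⟪c, x⟫ < a}) = R' ∩ {x | ⟪c', x⟫ < a'}

/-- A point configuration is projectively unique if every Lawrence equivalence with another
point configuration agrees on it with a projective transformation defined at all its points. -/
def ProjUniqueConfig {n : ℕ} (R : Set (ESp n)) : Prop :=
  R.Finite ∧ ∀ (R' : Set (ESp n)) (φ : ESp n → ESp n),
    LawrenceEquivConfig R R' φ →
    ∃ M : Matrix (Fin (n + 1)) (Fin (n + 1)) ℝ, IsUnit M.det ∧
      (∀ x ∈ R, projDen M x ≠ 0) ∧ ∀ x ∈ R, projApp M x = φ x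

/-- `R` is framed by `Q ⊆ R` if every Lawrence equivalence of `R` with another point
configuration that is the identity on `Q` is the identity on `R`. -/
def FramedBy {n : ℕ} (R Q : Set (ESp n)) : Prop :=
  Q ⊆ R ∧ ∀ (R' : Set (ESp n)) (φ : ESp n → ESp n),
    LawrenceEquivConfig R R' φ → (∀ q ∈ Q, φ q = q) → ∀ x ∈ R, φ x = x

/-- A PP configuration: a polytope together with a finite point set disjoint from it. -/
def IsPPConfig {n : ℕ} (P R : Set (ESp n)) : Prop :=
  IsPolytope P ∧ R.Finite ∧ P ∩ R = ∅

/-- Lawrence equivalence of PP configurations under a bijection `φ` of `F₀(P) ∪ R` with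
`F₀(P') ∪ R'` mapping `F₀(P)` onto `F₀(P')` and `R` onto `R'`. -/
def LawrenceEquivPP {n : ℕ} (P R P' R' : Set (ESp n)) (φ : ESp n → ESp n) : Prop :=
  Set.InjOn φ (verts P ∪ R) ∧ Set.BijOn φ (verts P) (verts P') ∧ Set.BijOn φ R R' ∧
  ∀ (c : ESp n) (a : ℝ), c ≠ 0 → (∀ x ∈ P, ⟪c, x⟫ ≤ a) →
    ∃ (c' : ESp n) (a' : ℝ), c' ≠ 0 ∧ (∀ x ∈ P', ⟪c', x⟫ ≤ a') ∧
      φ '' (verts P ∩ {x | ⟪c, x⟫ < a}) = verts P' ∩ {x | ⟪c', x⟫ < a'} ∧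
      φ '' (R ∩ {x | a < ⟪c, x⟫}) = R' ∩ {x | a' < ⟪c', x⟫} ∧
      φ '' (R ∩ {x | ⟪c, x⟫ < a}) = R' ∩ {x | ⟪c', x⟫ < a'}

/-- A PP configuration `(P, R)` is projectively unique if every Lawrence equivalence with
another PP configuration agrees on `F₀(P) ∪ R` with a projective transformation defined at
all points of `F₀(P) ∪ R`. -/
def ProjUniquePP {n : ℕ} (P R : Set (ESp n)) : Prop :=
  IsPPConfig P R ∧ ∀ (P' R' : Set (ESp n)) (φ : ESp n → ESp n),
    IsPPConfig P' R' → LawrenceEquivPP P R P' R' φ →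
    ∃ M : Matrix (Fin (n + 1)) (Fin (n + 1)) ℝ, IsUnit M.det ∧
      (∀ x ∈ verts P ∪ R, projDen M x ≠ 0) ∧ ∀ x ∈ verts P ∪ R, projApp M x = φ x

/-- `(P, R)` is framed by `Q ⊆ F₀(P) ∪ R` if every Lawrence equivalence of `(P, R)` with
another PP configuration that is the identity on `Q` is the identity. -/
def FramedPP {n : ℕ} (P R Q : Set (ESp n)) : Prop :=
  Q ⊆ verts P ∪ R ∧ ∀ (P' R' : Set (ESp n)) (φ : ESp n → ESp n),
    IsPPConfig P' R' → LawrenceEquivPP P R P' R' φ → (∀ q ∈ Q, φ q = q) →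
    ∀ x ∈ verts P ∪ R, φ x = x

/-- A polytope `P` is framed by `Q ⊆ F₀(P)` if `(P, ∅)` is framed by `Q`. -/
def PolytopeFramedBy {n : ℕ} (P Q : Set (ESp n)) : Prop := FramedPP P ∅ Q

/-- A weak projective triple `(P, Q, R)` in `ℝ^d`. -/
def WeakProjTriple {d : ℕ} (P Q R : Set (ESp d)) : Prop :=
  IsPolytope P ∧ Q ⊆ verts P ∧ R.Finite ∧
  ProjUniqueConfig (Q ∪ R) ∧
  PolytopeFramedBy P Q ∧
  ∃ S ⊆ R, ∃ (c : ESp d) (a : ℝ), c ≠ 0 ∧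
    (affineSpan ℝ S : Set (ESp d)) = {x | ⟪c, x⟫ = a} ∧
    {x | ⟪c, x⟫ = a} ∩ P = ∅

/-- A subpolytope of `S`: a convex hull of a subset of the vertices of `S`. -/
def IsSubpolytopeOf {n : ℕ} (P S : Set (ESp n)) : Prop :=
  ∃ V ⊆ verts S, P = convexHull ℝ V

/-- Stacked `d`-polytopes: `d`-simplices, closed under stacking a point `v` beyond a facet
`F` (i.e. `v` and the interior of `S` lie strictly on opposite sides of the affine hull of
`F`, and strictly on the same side of the affine hull of every other facet of `S`). -/
inductive IsStackedPolytope (d : ℕ) : Set (ESp d) → Prop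
  | simplex (V : Finset (ESp d)) (hcard : V.card = d + 1)
      (hind : AffineIndependent ℝ (Subtype.val : {x : ESp d // x ∈ V} → ESp d)) :
      IsStackedPolytope d (convexHull ℝ (V : Set (ESp d)))
  | stack (S F : Set (ESp d)) (v : ESp d) (hS : IsStackedPolytope d S)
      (hF : IsFaceOf S F) (hdim : polyDim F + 1 = d)
      (hbeyond : ∀ F', IsFaceOf S F' → polyDim F' + 1 = d →
        ∃ (c : ESp d) (a : ℝ), c ≠ 0 ∧
          (affineSpan ℝ F' : Set (ESp d)) = {x | ⟪c, x⟫ = a} ∧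
          interior S ⊆ {x | ⟪c, x⟫ < a} ∧
          (F' = F → a < ⟪c, v⟫) ∧ (F' ≠ F → ⟪c, v⟫ < a)) :
      IsStackedPolytope d (convexHull ℝ (S ∪ {v}))

/-- The first standard basis vector `e₁` of `ℝ²`. -/
def e1 : ESp 2 := EuclideanSpace.single 0 1

/-- The point configuration `Q² + 𝟏 = {0, 1, 2}²` in `ℝ²`. -/
def Qsq : Set (ESp 2) := {p | ∀ i, p i = 0 ∨ p i = 1 ∨ p i = 2}

/-- A functional arrangement for a function `f : ℝ^ι → ℝ`. -/
def IsFunctionalArrangement {ι : Type} [Fintype ι]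
    (f : (ι → ℝ) → ℝ) (F : (ι → ℝ) → Set (ESp 2)) : Prop :=
  ∀ x : ι → ℝ,
    (F x).Finite ∧
    (f x) • e1 ∈ F x ∧
    (∀ i, (x i) • e1 ∈ F x) ∧
    Qsq ⊆ F x ∧
    FramedBy (F x) ({p | ∃ i, p = (x i) • e1} ∪ Qsq) ∧
    ∀ (R' : Set (ESp 2)) (φ : ESp 2 → ESp 2),
      LawrenceEquivConfig (F x) R' φ → (∀ q ∈ Qsq, φ q = q) →
      φ ((f x) • e1) = (f x) • e1 →
      ∃ y : ι → ℝ, f y = f x ∧ ∀ i, φ ((x i) • e1) = (y i) • e1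
def pt (a b : ℝ) : ESp 2 := WithLp.toLp 2 ![a, b]

lemma inner2 (x y : ESp 2) : ⟪x, y⟫ = x 0 * y 0 + x 1 * y 1 := by
  simp [PiLp.inner_apply, Fin.sum_univ_two]; ring

lemma esp_ext {x y : ESp 2} (h0 : x 0 = y 0) (h1 : x 1 = y 1) : x = y := by
  ext i; fin_cases i <;> assumption

lemma esp_ne {x y : ESp 2} (h : x 0 ≠ y 0 ∨ x 1 ≠ y 1) : x ≠ y := by
  rintro rfl; rcases h with h | h <;> exact h rfl

variable {C R' : Set (ESp 2)} {φ : ESp 2 → ESp 2}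

lemma covector (h : LawrenceEquivConfig C R' φ) {c : ESp 2} (α : ℝ) (hc : c ≠ 0) :
    ∃ (c' : ESp 2) (α' : ℝ), c' ≠ 0 ∧
      ∀ x ∈ C, ⟪c, x⟫ = α → ⟪c', φ x⟫ = α' := by
  obtain ⟨c', α', hc', h1, h2⟩ := h.2 c α hc
  refine ⟨c', α', hc', fun x hx hxα => ?_⟩
  by_contra hne
  rcases lt_or_gt_of_ne hne with hlt | hgt
  · have hmem : φ x ∈ R' ∩ {z | ⟪c', z⟫ < α'} := ⟨h.1.mapsTo hx, hlt⟩
    rw [← h2] at hmem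
    obtain ⟨y, ⟨hyC, hy⟩, hyx⟩ := hmem
    have : y = x := h.1.injOn hyC hx hyx
    subst this; simp only [Set.mem_setOf_eq] at hy; linarith [hy, hxα.le]
  · have hmem : φ x ∈ R' ∩ {z | α' < ⟪c', z⟫} := ⟨h.1.mapsTo hx, hgt⟩
    rw [← h1] at hmem
    obtain ⟨y, ⟨hyC, hy⟩, hyx⟩ := hmem
    have : y = x := h.1.injOn hyC hx hyx
    subst this; simp only [Set.mem_setOf_eq] at hy; linarith [hy, hxα.le]

lemma exists_smul_of_perp {c u v : ESp 2} (hc : c ≠ 0) (hu : ⟪c, u⟫ = 0)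
    (hv : ⟪c, v⟫ = 0) (hv0 : v ≠ 0) : ∃ k : ℝ, u = k • v := by
  rw [inner2] at hu hv
  have hcc : c 0 ≠ 0 ∨ c 1 ≠ 0 := by
    by_contra hcon
    push_neg at hcon
    exact hc (esp_ext hcon.1 hcon.2)
  have hdet : u 0 * v 1 - u 1 * v 0 = 0 := by
    rcases hcc with h0 | h1
    · have : c 0 * (u 0 * v 1 - u 1 * v 0) = 0 := by linear_combination v 1 * hu - u 1 * hv
      exact (mul_eq_zero.mp this).resolve_left h0
    · have : c 1 * (u 0 * v 1 - u 1 * v 0) = 0 := by linear_combination (-(v 0)) * hu + u 0 * hv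
      exact (mul_eq_zero.mp this).resolve_left h1
  have hvc : v 0 ≠ 0 ∨ v 1 ≠ 0 := by
    by_contra hcon
    push_neg at hcon
    exact hv0 (esp_ext (by simp [hcon.1]) (by simp [hcon.2]))
  rcases hvc with h0 | h1
  · refine ⟨u 0 / v 0, esp_ext ?_ ?_⟩
    · show u 0 = (u 0 / v 0) * v 0; field_simp
    · show u 1 = (u 0 / v 0) * v 1; field_simp; linarith [hdet]
  · refine ⟨u 1 / v 1, esp_ext ?_ ?_⟩
    · show u 0 = (u 1 / v 1) * v 0; field_simp; linarith [hdet]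
    · show u 1 = (u 1 / v 1) * v 1; field_simp

lemma force1 (h : LawrenceEquivConfig C R' φ) {a b x : ESp 2}
    (ha : a ∈ C) (hb : b ∈ C) (hx : x ∈ C) (hab : a ≠ b)
    (hcol : ∃ k : ℝ, x = a + k • (b - a)) :
    ∃ k : ℝ, φ x = φ a + k • (φ b - φ a) := by
  set c₀ : ESp 2 := pt (-(b 1 - a 1)) (b 0 - a 0) with hc₀def
  have hc₀ : c₀ ≠ 0 := by
    intro h0
    apply hab
    have e0 := congrArg (fun v : ESp 2 => v 0) h0
    have e1 := congrArg (fun v : ESp 2 => v 1) h0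
    simp only [pt] at e0 e1
    refine esp_ext ?_ ?_ |>.symm
    · have : b 0 - a 0 = 0 := e1; linarith
    · have : -(b 1 - a 1) = 0 := e0; linarith
  obtain ⟨c', α', hc', hforce⟩ := covector h ⟪c₀, a⟫ hc₀
  have hinner : ∀ z : ESp 2, ⟪c₀, z⟫ = -(b 1 - a 1) * z 0 + (b 0 - a 0) * z 1 := by
    intro z; rw [inner2]; rfl
  have hfa : ⟪c', φ a⟫ = α' := hforce a ha rfl
  have hfb : ⟪c', φ b⟫ = α' := hforce b hb (by rw [hinner, hinner]; ring)
  have hfx : ⟪c', φ x⟫ = α' := by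
    apply hforce x hx
    obtain ⟨k, hk⟩ := hcol
    subst hk
    rw [hinner, hinner]
    have e0 : (a + k • (b - a)) 0 = a 0 + k * (b 0 - a 0) := rfl
    have e1 : (a + k • (b - a)) 1 = a 1 + k * (b 1 - a 1) := rfl
    rw [e0, e1]; ring
  have hu : ⟪c', φ x - φ a⟫ = 0 := by
    rw [inner_sub_right, hfa, hfx]; ring
  have hv : ⟪c', φ b - φ a⟫ = 0 := by
    rw [inner_sub_right, hfa, hfb]; ring
  have hv0 : φ b - φ a ≠ 0 := by
    refine sub_ne_zero.mpr fun hEq => hab ?_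
    exact h.1.injOn hb ha hEq |>.symm ▸ rfl
  obtain ⟨k, hk⟩ := exists_smul_of_perp hc' hu hv hv0
  exact ⟨k, by rw [← hk]; abel⟩

lemma force2 (h : LawrenceEquivConfig C R' φ) {a b c d x : ESp 2} {A B CC D y : ESp 2}
    (ha : a ∈ C) (hb : b ∈ C) (hc : c ∈ C) (hd : d ∈ C) (hx : x ∈ C)
    (hab : a ≠ b) (hcd : c ≠ d)
    (hx1 : ∃ k : ℝ, x = a + k • (b - a)) (hx2 : ∃ k : ℝ, x = c + k • (d - c))
    (hA : φ a = A) (hB : φ b = B) (hC : φ c = CC) (hD : φ d = D)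
    (huniq : ∀ z : ESp 2, (∃ k : ℝ, z = A + k • (B - A)) →
      (∃ k : ℝ, z = CC + k • (D - CC)) → z = y) :
    φ x = y := by
  have h1 := force1 h ha hb hx hab hx1
  have h2 := force1 h hc hd hx hcd hx2
  rw [hA, hB] at h1
  rw [hC, hD] at h2
  exact huniq _ h1 h2

lemma e1ne0 : (pt 1 0 : ESp 2) ≠ 0 := by
  intro h
  simpa [pt] using congrArg (fun v : ESp 2 => v 0) h

lemma order_upper (h : LawrenceEquivConfig C R' φ) {p q x : ESp 2} {t : ℝ}
    (hp : p ∈ C) (hq : q ∈ C) (hx : x ∈ C)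
    (hfp : φ p = p) (hfq : φ q = q) (hp1 : p 1 = 0) (hq1 : q 1 = 0)
    (hft : φ x = pt t 0) (α : ℝ)
    (hpα : p 0 < α) (hxα : x 0 < α) (hαq : α < q 0) : t < q 0 := by
  obtain ⟨c', α', hc', h1, h2⟩ := h.2 (pt 1 0) α e1ne0
  have hcz : ∀ z : ESp 2, ⟪(pt 1 0 : ESp 2), z⟫ = z 0 := by
    intro z; rw [inner2]; show 1 * z 0 + 0 * z 1 = z 0; ring
  have hmx : φ x ∈ R' ∩ {z | ⟪c', z⟫ < α'} := by
    rw [← h2]; exact ⟨x, ⟨hx, by simp [hcz, hxα]⟩, rfl⟩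
  have hmp : φ p ∈ R' ∩ {z | ⟪c', z⟫ < α'} := by
    rw [← h2]; exact ⟨p, ⟨hp, by simp [hcz, hpα]⟩, rfl⟩
  have hmq : φ q ∈ R' ∩ {z | α' < ⟪c', z⟫} := by
    rw [← h1]; exact ⟨q, ⟨hq, by simp [hcz, hαq]⟩, rfl⟩
  rw [hft] at hmx; rw [hfp] at hmp; rw [hfq] at hmq
  have ex : ⟪c', (pt t 0 : ESp 2)⟫ = c' 0 * t := by rw [inner2]; show c' 0 * t + c' 1 * 0 = c' 0 * t; ring
  have ep : ⟪c', p⟫ = c' 0 * p 0 := by rw [inner2, hp1]; ring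
  have eq' : ⟪c', q⟫ = c' 0 * q 0 := by rw [inner2, hq1]; ring
  have hx' : c' 0 * t < α' := by rw [← ex]; exact hmx.2
  have hp' : c' 0 * p 0 < α' := by rw [← ep]; exact hmp.2
  have hq' : α' < c' 0 * q 0 := by rw [← eq']; exact hmq.2
  have hβ : 0 < c' 0 := by nlinarith
  nlinarith

lemma order_lower (h : LawrenceEquivConfig C R' φ) {p q x : ESp 2} {t : ℝ}
    (hp : p ∈ C) (hq : q ∈ C) (hx : x ∈ C)
    (hfp : φ p = p) (hfq : φ q = q) (hp1 : p 1 = 0) (hq1 : q 1 = 0)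
    (hft : φ x = pt t 0) (α : ℝ)
    (hpα : p 0 < α) (hαx : α < x 0) (hαq : α < q 0) : p 0 < t := by
  obtain ⟨c', α', hc', h1, h2⟩ := h.2 (pt 1 0) α e1ne0
  have hcz : ∀ z : ESp 2, ⟪(pt 1 0 : ESp 2), z⟫ = z 0 := by
    intro z; rw [inner2]; show 1 * z 0 + 0 * z 1 = z 0; ring
  have hmx : φ x ∈ R' ∩ {z | α' < ⟪c', z⟫} := by
    rw [← h1]; exact ⟨x, ⟨hx, by simp [hcz, hαx]⟩, rfl⟩
  have hmp : φ p ∈ R' ∩ {z | ⟪c', z⟫ < α'} := by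
    rw [← h2]; exact ⟨p, ⟨hp, by simp [hcz, hpα]⟩, rfl⟩
  have hmq : φ q ∈ R' ∩ {z | α' < ⟪c', z⟫} := by
    rw [← h1]; exact ⟨q, ⟨hq, by simp [hcz, hαq]⟩, rfl⟩
  rw [hft] at hmx; rw [hfp] at hmp; rw [hfq] at hmq
  have ex : ⟪c', (pt t 0 : ESp 2)⟫ = c' 0 * t := by rw [inner2]; show c' 0 * t + c' 1 * 0 = c' 0 * t; ring
  have ep : ⟪c', p⟫ = c' 0 * p 0 := by rw [inner2, hp1]; ring
  have eq' : ⟪c', q⟫ = c' 0 * q 0 := by rw [inner2, hq1]; ring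
  have hx' : α' < c' 0 * t := by rw [← ex]; exact hmx.2
  have hp' : c' 0 * p 0 < α' := by rw [← ep]; exact hmp.2
  have hq' : α' < c' 0 * q 0 := by rw [← eq']; exact hmq.2
  have hβ : 0 < c' 0 := by nlinarith
  nlinarith

def Fpt (C : Set (ESp 2)) (φ : ESp 2 → ESp 2) (x y : ESp 2) : Prop := x ∈ C ∧ φ x = y

lemma grid_mem {a b : ℝ} (ha : a = 0 ∨ a = 1 ∨ a = 2) (hb : b = 0 ∨ b = 1 ∨ b = 2) :
    pt a b ∈ Qsq := by
  intro i; fin_cases i <;> simpa [pt]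

lemma grid_fpt (hQ : ∀ q ∈ Qsq, φ q = q) (hQC : Qsq ⊆ C) {a b : ℝ}
    (ha : a = 0 ∨ a = 1 ∨ a = 2) (hb : b = 0 ∨ b = 1 ∨ b = 2) :
    Fpt C φ (pt a b) (pt a b) :=
  ⟨hQC (grid_mem ha hb), hQ _ (grid_mem ha hb)⟩

lemma lemH (hLE : LawrenceEquivConfig C R' φ) (hQ : ∀ q ∈ Qsq, φ q = q) (hQC : Qsq ⊆ C)
    {a b x A B : ESp 2} {h : ℝ}
    (hFa : Fpt C φ a A) (hFb : Fpt C φ b B) (hxC : x ∈ C)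
    (hh : h = 0 ∨ h = 1 ∨ h = 2)
    (hab : a 1 ≠ b 1) (hAB : A 1 ≠ B 1)
    (hxdef : x = a + ((h - a 1) / (b 1 - a 1)) • (b - a)) :
    Fpt C φ x (A + ((h - A 1) / (B 1 - A 1)) • (B - A)) := by
  refine ⟨hxC, ?_⟩
  have hg1 : pt 0 h ∈ Qsq := grid_mem (Or.inl rfl) hh
  have hg2 : pt 1 h ∈ Qsq := grid_mem (Or.inr (Or.inl rfl)) hh
  have hx1c : x 1 = h := by
    rw [hxdef]
    show a 1 + (h - a 1) / (b 1 - a 1) * (b 1 - a 1) = h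
    rw [div_mul_cancel₀ _ (sub_ne_zero.mpr hab.symm)]; ring
  apply force2 hLE hFa.1 hFb.1 (hQC hg1) (hQC hg2) hxC
    (fun e => hab (by rw [e])) ?_ ⟨_, hxdef⟩ ?_ hFa.2 hFb.2 (hQ _ hg1) (hQ _ hg2) ?_
  · intro e
    have := congrArg (fun v : ESp 2 => v 0) e
    simp [pt] at this
  · refine ⟨x 0, esp_ext ?_ ?_⟩
    · show x 0 = 0 + x 0 * (1 - 0); ring
    · show x 1 = h + x 0 * (h - h); rw [hx1c]; ring
  · rintro z ⟨k, rfl⟩ ⟨k₂, hz2⟩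
    have hz1 : A 1 + k * (B 1 - A 1) = h := by
      have := congrArg (fun v : ESp 2 => v 1) hz2
      rw [show ((pt 0 h : ESp 2) + k₂ • (pt 1 h - pt 0 h)) 1 = h + k₂ * (h - h) from rfl] at this
      rw [show ((A : ESp 2) + k • (B - A)) 1 = A 1 + k * (B 1 - A 1) from rfl] at this
      linarith [this]
    have hk : k = (h - A 1) / (B 1 - A 1) := by
      rw [eq_div_iff (sub_ne_zero.mpr hAB.symm)]; linarith [hz1]
    rw [hk]

lemma lemV (hLE : LawrenceEquivConfig C R' φ) (hQ : ∀ q ∈ Qsq, φ q = q) (hQC : Qsq ⊆ C)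
    {a b x A B : ESp 2}
    (hFa : Fpt C φ a A) (hFb : Fpt C φ b B) (hxC : x ∈ C)
    (hab : a 0 ≠ b 0) (hAB : A 0 ≠ B 0)
    (hxdef : x = a + ((0 - a 0) / (b 0 - a 0)) • (b - a)) :
    Fpt C φ x (A + ((0 - A 0) / (B 0 - A 0)) • (B - A)) := by
  refine ⟨hxC, ?_⟩
  have hg1 : pt 0 0 ∈ Qsq := grid_mem (Or.inl rfl) (Or.inl rfl)
  have hg2 : pt 0 1 ∈ Qsq := grid_mem (Or.inl rfl) (Or.inr (Or.inl rfl))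
  have hx0c : x 0 = 0 := by
    rw [hxdef]
    show a 0 + (0 - a 0) / (b 0 - a 0) * (b 0 - a 0) = 0
    rw [div_mul_cancel₀ _ (sub_ne_zero.mpr hab.symm)]; ring
  apply force2 hLE hFa.1 hFb.1 (hQC hg1) (hQC hg2) hxC
    (fun e => hab (by rw [e])) ?_ ⟨_, hxdef⟩ ?_ hFa.2 hFb.2 (hQ _ hg1) (hQ _ hg2) ?_
  · intro e
    have := congrArg (fun v : ESp 2 => v 1) e
    simp [pt] at this
  · refine ⟨x 1, esp_ext ?_ ?_⟩
    · show x 0 = 0 + x 1 * (0 - 0); rw [hx0c]; ring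
    · show x 1 = 0 + x 1 * (1 - 0); ring
  · rintro z ⟨k, rfl⟩ ⟨k₂, hz2⟩
    have hz0 : A 0 + k * (B 0 - A 0) = 0 := by
      have := congrArg (fun v : ESp 2 => v 0) hz2
      rw [show ((pt 0 0 : ESp 2) + k₂ • (pt 0 1 - pt 0 0)) 0 = 0 + k₂ * (0 - 0) from rfl] at this
      rw [show ((A : ESp 2) + k • (B - A)) 0 = A 0 + k * (B 0 - A 0) from rfl] at this
      linarith [this]
    have hk : k = (0 - A 0) / (B 0 - A 0) := by
      rw [eq_div_iff (sub_ne_zero.mpr hAB.symm)]; linarith [hz0]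
    rw [hk]

lemma ptcalc0 (a b : ℝ) (k : ℝ) (c d : ℝ) :
    (pt a b + k • (pt c d - pt a b) : ESp 2) = pt (a + k*(c-a)) (b + k*(d-b)) := by
  ext i; fin_cases i <;> simp [pt] <;> ring

lemma coord0 (a b : ℝ) : (pt a b : ESp 2) 0 = a := rfl
lemma coord1 (a b : ℝ) : (pt a b : ESp 2) 1 = b := rfl

lemma halfup (hLE : LawrenceEquivConfig C R' φ) (hQ : ∀ q ∈ Qsq, φ q = q) (hQC : Qsq ⊆ C)
    {u u' : ℝ} (hu : Fpt C φ (pt u 0) (pt u' 0)) (hm : pt (u/2) 1 ∈ C) :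
    Fpt C φ (pt (u/2) 1) (pt (u'/2) 1) := by
  have h := lemH hLE hQ hQC hu
    (grid_fpt hQ hQC (Or.inl rfl) (Or.inr (Or.inr rfl))) hm
    (Or.inr (Or.inl rfl)) (by simp [coord1]) (by simp [coord1])
    (by rw [coord1, coord1, ptcalc0]; norm_num; congr 1 <;> ring)
  rw [coord1, coord1, ptcalc0] at h
  convert h using 2 <;> norm_num <;> ring

lemma fpt_rw {x y y' : ESp 2} (h : Fpt C φ x y) (e : y = y') : Fpt C φ x y' := e ▸ h
lemma fpt_rwx {x x' y : ESp 2} (h : Fpt C φ x y) (e : x = x') : Fpt C φ x' y := e ▸ h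

variable (hLE : LawrenceEquivConfig C R' φ) (hQ : ∀ q ∈ Qsq, φ q = q) (hQC : Qsq ⊆ C)
include hLE hQ hQC

lemma shoot2 {v a v' a' : ℝ}
    (hv : Fpt C φ (pt v 0) (pt v' 0)) (ha : Fpt C φ (pt a 1) (pt a' 1))
    (hm : pt (2*a - v) 2 ∈ C) :
    Fpt C φ (pt (2*a - v) 2) (pt (2*a' - v') 2) := by
  have h := lemH hLE hQ hQC hv ha hm
    (Or.inr (Or.inr rfl)) (by simp [coord1]) (by simp [coord1])
    (by rw [coord1, coord1, ptcalc0]; norm_num; congr 1 <;> ring)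
  rw [coord1, coord1, ptcalc0] at h
  refine fpt_rw h ?_
  norm_num
  congr 1 <;> ring

lemma drop0 {c c' : ℝ}
    (hc : Fpt C φ (pt c 2) (pt c' 2)) (hm : pt (-c) 0 ∈ C) :
    Fpt C φ (pt (-c) 0) (pt (-c') 0) := by
  have h := lemH hLE hQ hQC
    (grid_fpt hQ hQC (Or.inl rfl) (Or.inr (Or.inl rfl))) hc hm
    (Or.inl rfl) (by norm_num [coord1]) (by norm_num [coord1])
    (by rw [coord1, coord1, ptcalc0]; norm_num)
  rw [coord1, coord1, ptcalc0] at h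
  refine fpt_rw h ?_
  norm_num

lemma sub_forced {u v u' v' : ℝ}
    (hu : Fpt C φ (pt u 0) (pt u' 0)) (hv : Fpt C φ (pt v 0) (pt v' 0))
    (m1 : pt (u/2) 1 ∈ C) (m2 : pt (u - v) 2 ∈ C) (m3 : pt (v - u) 0 ∈ C) :
    Fpt C φ (pt (u/2) 1) (pt (u'/2) 1) ∧ Fpt C φ (pt (u - v) 2) (pt (u' - v') 2) ∧
      Fpt C φ (pt (v - u) 0) (pt (v' - u') 0) := by
  have h1 := halfup hLE hQ hQC hu m1
  have h2 := shoot2 hLE hQ hQC hv h1 (by rw [show 2*(u/2) - v = u - v by ring]; exact m2)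
  rw [show 2*(u/2) - v = u - v by ring, show 2*(u'/2) - v' = u' - v' by ring] at h2
  have h3 := drop0 hLE hQ hQC h2 (by rw [show -(u-v) = v - u by ring]; exact m3)
  rw [show -(u-v) = v - u by ring, show -(u'-v') = v' - u' by ring] at h3
  exact ⟨h1, h2, h3⟩

lemma lift2 {w w' : ℝ}
    (hw : Fpt C φ (pt w 0) (pt w' 0))
    (m1 : pt (w/2) 1 ∈ C) (m2 : pt w 2 ∈ C) :
    Fpt C φ (pt (w/2) 1) (pt (w'/2) 1) ∧ Fpt C φ (pt w 2) (pt w' 2) := by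
  have h1 := halfup hLE hQ hQC hw m1
  have h0 : Fpt C φ (pt 0 0) (pt 0 0) := grid_fpt hQ hQC (Or.inl rfl) (Or.inl rfl)
  have h2 := shoot2 hLE hQ hQC h0 h1 (by rw [show 2*(w/2) - 0 = w by ring]; exact m2)
  rw [show 2*(w/2) - 0 = w by ring, show 2*(w'/2) - 0 = w' by ring] at h2
  exact ⟨h1, h2⟩

lemma lift1 {w w' : ℝ}
    (hw : Fpt C φ (pt w 0) (pt w' 0))
    (m1 : pt (w/2) 1 ∈ C) (m2 : pt w 2 ∈ C) (m3 : pt w 1 ∈ C) :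
    Fpt C φ (pt (w/2) 1) (pt (w'/2) 1) ∧ Fpt C φ (pt w 2) (pt w' 2) ∧
      Fpt C φ (pt w 1) (pt w' 1) := by
  obtain ⟨h1, h2⟩ := lift2 hLE hQ hQC hw m1 m2
  have h3 := lemH hLE hQ hQC hw h2 m3
    (Or.inr (Or.inl rfl)) (by norm_num [coord1]) (by norm_num [coord1])
    (by rw [coord1, coord1, ptcalc0]; norm_num)
  rw [coord1, coord1, ptcalc0] at h3
  norm_num at h3
  exact ⟨h1, h2, h3⟩

lemma invstep {u m u' m' : ℝ}
    (hu : Fpt C φ (pt u 0) (pt u' 0)) (hmid : Fpt C φ (pt m 1) (pt m' 1))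
    (hum : u ≠ m) (hum' : u' ≠ m')
    (hmem : pt 0 (u/(u - m)) ∈ C) :
    Fpt C φ (pt 0 (u/(u - m))) (pt 0 (u'/(u' - m'))) := by
  have d1 : u - m ≠ 0 := sub_ne_zero.mpr hum
  have d2 : m - u ≠ 0 := sub_ne_zero.mpr (Ne.symm hum)
  have d1' : u' - m' ≠ 0 := sub_ne_zero.mpr hum'
  have d2' : m' - u' ≠ 0 := sub_ne_zero.mpr (Ne.symm hum')
  have h := lemV hLE hQ hQC hu hmid hmem
    (by simpa [coord0] using hum) (by simpa [coord0] using hum')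
    (by
      rw [coord0, coord0, ptcalc0]
      refine esp_ext ?_ ?_ <;> simp only [coord0, coord1] <;> field_simp <;> ring)
  rw [coord0, coord0, ptcalc0] at h
  refine fpt_rw h ?_
  refine esp_ext ?_ ?_ <;> simp only [coord0, coord1] <;> field_simp <;> ring

lemma projmul {w v w' v' : ℝ}
    (hw : Fpt C φ (pt 0 w) (pt 0 w')) (hv : Fpt C φ (pt v 1) (pt v' 1))
    (hw1 : w ≠ 1) (hw1' : w' ≠ 1)
    (hmem : pt (v*w/(w-1)) 0 ∈ C) :
    Fpt C φ (pt (v*w/(w-1)) 0) (pt (v'*w'/(w'-1)) 0) := by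
  have d1 : w - 1 ≠ 0 := sub_ne_zero.mpr hw1
  have d2 : (1:ℝ) - w ≠ 0 := sub_ne_zero.mpr (Ne.symm hw1)
  have d1' : w' - 1 ≠ 0 := sub_ne_zero.mpr hw1'
  have d2' : (1:ℝ) - w' ≠ 0 := sub_ne_zero.mpr (Ne.symm hw1')
  have h := lemH hLE hQ hQC hw hv hmem
    (Or.inl rfl) (by simpa [coord1] using hw1) (by simpa [coord1] using hw1')
    (by
      rw [coord1, coord1, ptcalc0]
      refine esp_ext ?_ ?_ <;> simp only [coord0, coord1] <;> field_simp <;> ring)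
  rw [coord1, coord1, ptcalc0] at h
  refine fpt_rw h ?_
  refine esp_ext ?_ ?_ <;> simp only [coord0, coord1] <;> field_simp <;> ring

def subAux (u v : ℝ) : Set (ESp 2) := {pt (u/2) 1, pt (u-v) 2, pt (v-u) 0}
def addAux (u v : ℝ) : Set (ESp 2) := subAux u 0 ∪ subAux (-u) v
def lift1Aux (w : ℝ) : Set (ESp 2) := {pt (w/2) 1, pt w 2, pt w 1}
def muldivAux (u v m : ℝ) : Set (ESp 2) := {pt 0 (u/(u-m)), pt (u*v/m) 0}

lemma sub_forced' {u v u' v' : ℝ}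
    (hu : Fpt C φ (pt u 0) (pt u' 0)) (hv : Fpt C φ (pt v 0) (pt v' 0))
    (hm : subAux u v ⊆ C) :
    Fpt C φ (pt (u/2) 1) (pt (u'/2) 1) ∧ Fpt C φ (pt (u - v) 2) (pt (u' - v') 2) ∧
      Fpt C φ (pt (v - u) 0) (pt (v' - u') 0) :=
  sub_forced hLE hQ hQC hu hv (hm (by simp [subAux])) (hm (by simp [subAux]))
    (hm (by simp [subAux]))

lemma add_forced {u v u' v' : ℝ}
    (hu : Fpt C φ (pt u 0) (pt u' 0)) (hv : Fpt C φ (pt v 0) (pt v' 0))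
    (hm : addAux u v ⊆ C) :
    Fpt C φ (pt (u + v) 0) (pt (u' + v') 0) ∧ ∀ x ∈ addAux u v, ∃ y, Fpt C φ x y ∧
      (u' = u → v' = v → y = x) := by
  have h0 : Fpt C φ (pt 0 0) (pt 0 0) := grid_fpt hQ hQC (Or.inl rfl) (Or.inl rfl)
  have s1 := sub_forced' hLE hQ hQC hu h0 (fun x hx => hm (Or.inl hx))
  have hneg : Fpt C φ (pt (-u) 0) (pt (-u') 0) := by
    have := s1.2.2
    rwa [zero_sub, zero_sub] at this
  have s2 := sub_forced' hLE hQ hQC hneg hv (fun x hx => hm (Or.inr hx))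
  have hres : Fpt C φ (pt (u + v) 0) (pt (u' + v') 0) := by
    have := s2.2.2
    rw [sub_neg_eq_add, sub_neg_eq_add] at this
    rwa [add_comm v u, add_comm v' u'] at this
  refine ⟨hres, ?_⟩
  intro x hx
  rcases hx with hx | hx <;> simp only [subAux, Set.mem_insert_iff, Set.mem_singleton_iff] at hx
  · rcases hx with rfl | rfl | rfl
    · exact ⟨_, s1.1, fun e1 _ => by rw [e1]⟩
    · exact ⟨_, s1.2.1, fun e1 _ => by rw [e1]⟩
    · exact ⟨_, s1.2.2, fun e1 _ => by rw [e1]⟩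
  · rcases hx with rfl | rfl | rfl
    · exact ⟨_, s2.1, fun e1 _ => by rw [e1]⟩
    · exact ⟨_, s2.2.1, fun e1 e2 => by rw [e1, e2]⟩
    · exact ⟨_, s2.2.2, fun e1 e2 => by rw [e1, e2]⟩

lemma lift1_forced {w w' : ℝ}
    (hw : Fpt C φ (pt w 0) (pt w' 0)) (hm : lift1Aux w ⊆ C) :
    Fpt C φ (pt w 1) (pt w' 1) ∧ ∀ x ∈ lift1Aux w, ∃ y, Fpt C φ x y ∧ (w' = w → y = x) := by
  obtain ⟨h1, h2, h3⟩ := lift1 hLE hQ hQC hw (hm (by simp [lift1Aux]))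
    (hm (by simp [lift1Aux])) (hm (by simp [lift1Aux]))
  refine ⟨h3, ?_⟩
  intro x hx
  simp only [lift1Aux, Set.mem_insert_iff, Set.mem_singleton_iff] at hx
  rcases hx with rfl | rfl | rfl
  · exact ⟨_, h1, fun e => by rw [e]⟩
  · exact ⟨_, h2, fun e => by rw [e]⟩
  · exact ⟨_, h3, fun e => by rw [e]⟩

lemma muldiv_forced {u v m u' v' m' : ℝ}
    (hu : Fpt C φ (pt u 0) (pt u' 0)) (hv : Fpt C φ (pt v 1) (pt v' 1))
    (hc : Fpt C φ (pt m 1) (pt m' 1))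
    (hum : u ≠ m) (hum' : u' ≠ m') (hm0 : m ≠ 0) (hm0' : m' ≠ 0)
    (hmem : muldivAux u v m ⊆ C) :
    Fpt C φ (pt (u*v/m) 0) (pt (u'*v'/m') 0) ∧
      Fpt C φ (pt 0 (u/(u-m))) (pt 0 (u'/(u'-m'))) := by
  have d1 : u - m ≠ 0 := sub_ne_zero.mpr hum
  have d1' : u' - m' ≠ 0 := sub_ne_zero.mpr hum'
  have hi := invstep hLE hQ hQC hu hc hum hum' (hmem (by simp [muldivAux]))
  have hw1 : u/(u-m) ≠ 1 := by
    intro e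
    rw [div_eq_iff d1, one_mul] at e
    exact hm0 (by linarith)
  have hw1' : u'/(u'-m') ≠ 1 := by
    intro e
    rw [div_eq_iff d1', one_mul] at e
    exact hm0' (by linarith)
  have key : v * (u/(u-m)) / (u/(u-m) - 1) = u*v/m := by
    rw [show u/(u-m) - 1 = m/(u-m) by rw [div_sub_one d1]; congr 1; ring]
    rw [div_div_eq_mul_div, mul_assoc, div_mul_cancel₀ _ d1, mul_comm]
  have key' : v' * (u'/(u'-m')) / (u'/(u'-m') - 1) = u'*v'/m' := by
    rw [show u'/(u'-m') - 1 = m'/(u'-m') by rw [div_sub_one d1']; congr 1; ring]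
    rw [div_div_eq_mul_div, mul_assoc, div_mul_cancel₀ _ d1', mul_comm]
  have hp := projmul hLE hQ hQC hi hv hw1 hw1'
    (by rw [key]; exact hmem (by simp [muldivAux]))
  rw [key, key'] at hp
  exact ⟨hp, hi⟩

def auxN : ℕ → Set (ESp 2)
  | 0 => ∅
  | (n+1) => auxN n ∪ addAux 1 (n:ℝ)

lemma nat_forced (n : ℕ) (hm : auxN n ⊆ C) :
    Fpt C φ (pt (n:ℝ) 0) (pt (n:ℝ) 0) ∧ ∀ x ∈ auxN n, φ x = x := by
  induction n with
  | zero =>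
    refine ⟨?_, by simp [auxN]⟩
    exact_mod_cast grid_fpt hQ hQC (Or.inl rfl) (Or.inl rfl)
  | succ n ih =>
    have hm' : auxN n ⊆ C := fun x hx => hm (Or.inl hx)
    obtain ⟨hF, hsweep⟩ := ih hm'
    have h1 : Fpt C φ (pt 1 0) (pt 1 0) :=
      grid_fpt hQ hQC (Or.inr (Or.inl rfl)) (Or.inl rfl)
    obtain ⟨hres, haux⟩ := add_forced hLE hQ hQC h1 hF (fun x hx => hm (Or.inr hx))
    constructor
    · refine fpt_rw (fpt_rwx hres ?_) ?_ <;> · congr 1; push_cast; ring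
    · intro x hx
      rcases hx with hx | hx
      · exact hsweep x hx
      · obtain ⟨y, hy, he⟩ := haux x hx
        rw [hy.2, he rfl rfl]

def intAux (z : ℤ) : Set (ESp 2) := auxN z.natAbs ∪ subAux (z.natAbs : ℝ) 0

lemma int_forced (z : ℤ) (hm : intAux z ⊆ C) :
    Fpt C φ (pt (z:ℝ) 0) (pt (z:ℝ) 0) ∧ ∀ x ∈ intAux z, φ x = x := by
  obtain ⟨hN, hsweep⟩ := nat_forced hLE hQ hQC z.natAbs (fun x hx => hm (Or.inl hx))
  have h0 : Fpt C φ (pt 0 0) (pt 0 0) := grid_fpt hQ hQC (Or.inl rfl) (Or.inl rfl)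
  have s1 := sub_forced' hLE hQ hQC hN h0 (fun x hx => hm (Or.inr hx))
  constructor
  · rcases Int.natAbs_eq z with h | h
    · have e : ((z.natAbs : ℝ)) = (z:ℝ) := by
        conv_rhs => rw [h]
        rw [Int.cast_natCast]
      exact fpt_rw (fpt_rwx hN (by rw [e])) (by rw [e])
    · have e : (0:ℝ) - (z.natAbs : ℝ) = (z:ℝ) := by
        have : (0:ℤ) - (z.natAbs : ℤ) = z := by omega
        exact_mod_cast this
      exact fpt_rw (fpt_rwx s1.2.2 (by rw [e])) (by rw [e])
  · intro x hx
    rcases hx with hx | hx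
    · exact hsweep x hx
    · simp only [subAux, Set.mem_insert_iff, Set.mem_singleton_iff] at hx
      rcases hx with rfl | rfl | rfl
      · exact s1.1.2
      · exact s1.2.1.2
      · exact s1.2.2.2

def ratAux (r : ℚ) : Set (ESp 2) :=
  if r = 1 then ∅ else
    intAux r.num ∪ intAux (r.den : ℤ) ∪ lift1Aux (r.den : ℝ) ∪
      muldivAux (r.num : ℝ) 1 (r.den : ℝ)

lemma rat_forced (r : ℚ) (hm : ratAux r ⊆ C) :
    Fpt C φ (pt (r:ℝ) 0) (pt (r:ℝ) 0) ∧ ∀ x ∈ ratAux r, φ x = x := by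
  by_cases h1 : r = 1
  · subst h1
    refine ⟨?_, by simp [ratAux]⟩
    have := grid_fpt hQ hQC (Or.inr (Or.inl rfl)) (Or.inl rfl)
    simpa using this
  · rw [ratAux, if_neg h1] at hm
    obtain ⟨hnum, hsw1⟩ := int_forced hLE hQ hQC r.num
      (fun x hx => hm (Or.inl (Or.inl (Or.inl hx))))
    obtain ⟨hden, hsw2⟩ := int_forced hLE hQ hQC (r.den : ℤ)
      (fun x hx => hm (Or.inl (Or.inl (Or.inr hx))))
    have hden' : Fpt C φ (pt (r.den : ℝ) 0) (pt (r.den : ℝ) 0) := by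
      have e : (((r.den:ℤ)):ℝ) = ((r.den:ℕ):ℝ) := by push_cast; ring
      exact fpt_rw (fpt_rwx hden (by rw [e])) (by rw [e])
    obtain ⟨hdenL1, hsw3⟩ := lift1_forced hLE hQ hQC hden'
      (fun x hx => hm (Or.inl (Or.inr hx)))
    have hone : Fpt C φ (pt 1 1) (pt 1 1) :=
      grid_fpt hQ hQC (Or.inr (Or.inl rfl)) (Or.inr (Or.inl rfl))
    have hne : (r.num : ℝ) ≠ (r.den : ℝ) := by
      intro e
      have e' : r.num = (r.den : ℤ) := by exact_mod_cast e
      apply h1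
      have hd : ((r.den : ℚ)) ≠ 0 := by
        exact_mod_cast r.den_nz
      have hh := Rat.num_div_den r
      rw [e'] at hh
      rw [Int.cast_natCast, div_self hd] at hh
      exact hh.symm
    have hd0 : (r.den : ℝ) ≠ 0 := by
      exact_mod_cast r.den_nz
    obtain ⟨hres, hinv⟩ := muldiv_forced hLE hQ hQC hnum hone hdenL1 hne hne hd0 hd0
      (fun x hx => hm (Or.inr hx))
    constructor
    · have e : pt ((r.num:ℝ) * 1 / (r.den:ℝ)) 0 = pt ((r:ℝ)) 0 := by
        congr 1
        rw [Rat.cast_def]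
        ring
      exact fpt_rw (fpt_rwx hres e) e
    · intro x hx
      rw [ratAux, if_neg h1] at hx
      rcases hx with ((hx | hx) | hx) | hx
      · exact hsw1 x hx
      · exact hsw2 x hx
      · obtain ⟨y, hy, he⟩ := hsw3 x hx
        rw [hy.2, he rfl]
      · simp only [muldivAux, Set.mem_insert_iff, Set.mem_singleton_iff] at hx
        rcases hx with rfl | rfl
        · exact hinv.2
        · exact hres.2

omit hLE hQ hQC

def SH (c : ℕ → ℝ) (n k : ℕ) (x : ℝ) : ℝ := ∑ i ∈ Finset.range (n + 1 - k), c (k+i) * x ^ i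

lemma SH_last (c : ℕ → ℝ) (n : ℕ) (x : ℝ) : SH c n n x = c n := by
  rw [SH, show n + 1 - n = 1 by omega]
  simp

lemma SH_step (c : ℕ → ℝ) {n k : ℕ} (hk : k < n) (x : ℝ) :
    SH c n k x = c k + x * SH c n (k+1) x := by
  rw [SH, SH, show n + 1 - k = (n - k) + 1 by omega, Finset.sum_range_succ']
  rw [show n + 1 - (k+1) = n - k by omega]
  simp only [pow_zero, mul_one, add_zero]
  rw [add_comm, Finset.mul_sum]
  congr 1
  apply Finset.sum_congr rfl
  intro i _
  rw [show k + (i+1) = k + 1 + i by omega]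
  ring

lemma SH_cont (c : ℕ → ℝ) (n k : ℕ) : Continuous (SH c n k) := by
  apply continuous_finset_sum
  intro i _
  exact continuous_const.mul (continuous_pow i)


lemma set3_finite (a b c : ESp 2) : ({a, b, c} : Set (ESp 2)).Finite :=
  ((Set.finite_singleton c).insert b).insert a

lemma subAux_finite (u v : ℝ) : (subAux u v).Finite := set3_finite _ _ _
lemma addAux_finite (u v : ℝ) : (addAux u v).Finite :=
  (subAux_finite _ _).union (subAux_finite _ _)
lemma lift1Aux_finite (w : ℝ) : (lift1Aux w).Finite := set3_finite _ _ _
lemma muldivAux_finite (u v m : ℝ) : (muldivAux u v m).Finite :=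
  (Set.finite_singleton _).insert _
lemma auxN_finite (n : ℕ) : (auxN n).Finite := by
  induction n with
  | zero => simp [auxN]
  | succ n ih => exact ih.union (addAux_finite _ _)
lemma intAux_finite (z : ℤ) : (intAux z).Finite :=
  (auxN_finite _).union (subAux_finite _ _)
lemma ratAux_finite (r : ℚ) : (ratAux r).Finite := by
  rw [ratAux]
  split
  · simp
  · exact (((((intAux_finite _).union (intAux_finite _))).union (lift1Aux_finite _)).union
      (muldivAux_finite _ _ _))

lemma Qsq_finite : Qsq.Finite := by
  have hsub : Qsq ⊆ (fun q : ℝ × ℝ => pt q.1 q.2) ''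
      ((({0, 1, 2} : Set ℝ)) ×ˢ (({0, 1, 2} : Set ℝ))) := by
    intro p hp
    refine ⟨(p 0, p 1), ⟨?_, ?_⟩, ?_⟩
    · simpa using hp 0
    · simpa using hp 1
    · ext i; fin_cases i <;> rfl
  exact (Set.Finite.image _ ((((Set.finite_singleton (2:ℝ)).insert 1).insert 0).prod
    (((Set.finite_singleton (2:ℝ)).insert 1).insert 0))).subset hsub

lemma pt_eq {a b a' b' : ℝ} (h1 : a = a') (h2 : b = b') : pt a b = pt a' b' := by
  rw [h1, h2]

lemma smul_e1 (ζ : ℝ) : ζ • e1 = pt ζ 0 := by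
  ext i; fin_cases i <;> simp [pt, e1, EuclideanSpace.single_apply]

/-- For each real algebraic number `ζ` there is a point configuration in `ℝ²` containing
`ζe₁` and `Q² + 𝟏 = {0, 1, 2}²` that is framed by `Q² + 𝟏`. -/
theorem algebraic_number_framed_configuration
    (ζ : ℝ) (hζ : IsAlgebraic ℚ ζ) :
    ∃ C : Set (ESp 2), C.Finite ∧ ζ • e1 ∈ C ∧ Qsq ⊆ C ∧ FramedBy C Qsq := by
  classical
  obtain ⟨p, hp0, hpz⟩ := hζ
  set P : Polynomial ℤ := IsLocalization.integerNormalization (nonZeroDivisors ℤ) p with hPdef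
  have hP0 : P ≠ 0 := fun h => hp0 ((IsFractionRing.integerNormalization_eq_zero_iff).mp h)
  have hPz : Polynomial.aeval ζ P = 0 :=
    IsLocalization.integerNormalization_aeval_eq_zero (nonZeroDivisors ℤ) p hpz
  set Pm : Polynomial ℝ := P.map (Int.castRingHom ℝ) with hPmdef
  have hPm0 : Pm ≠ 0 := by
    rw [hPmdef]
    exact (Polynomial.map_ne_zero_iff Int.cast_injective).mpr hP0
  have hPmζ : Pm.eval ζ = 0 := by
    rw [hPmdef, Polynomial.eval_map]
    rw [Polynomial.aeval_def] at hPz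
    rwa [show algebraMap ℤ ℝ = Int.castRingHom ℝ from rfl] at hPz
  set n : ℕ := P.natDegree with hn
  set c : ℕ → ℝ := fun k => ((P.coeff k : ℤ) : ℝ) with hcdef
  have hSeval : ∀ x : ℝ, SH c n 0 x = Pm.eval x := by
    intro x
    rw [Polynomial.eval_eq_sum_range' (lt_of_le_of_lt (Polynomial.natDegree_map_le)
      (Nat.lt_succ_self n))]
    rw [SH, Nat.sub_zero]
    apply Finset.sum_congr rfl
    intro i _
    rw [Polynomial.coeff_map]
    simp [hcdef]
  set mm : ℕ → ℝ := fun k => if SH c n (k+1) ζ = 1 then 2 else 1 with hmmdef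
  have hmζ : ∀ k, SH c n (k+1) ζ ≠ mm k := by
    intro k
    by_cases h : SH c n (k+1) ζ = 1 <;> simp [hmmdef, h]
  have hm12 : ∀ k, mm k = 1 ∨ mm k = 2 := by
    intro k
    by_cases h : SH c n (k+1) ζ = 1 <;> simp [hmmdef, h]
  have hm0 : ∀ k, mm k ≠ 0 := by
    intro k
    rcases hm12 k with h | h <;> rw [h] <;> norm_num
  -- isolating neighborhood
  set B : Set ℝ := {x : ℝ | Pm.eval x = 0 ∧ x ≠ ζ} with hBdef
  have hBfin : B.Finite := (Polynomial.finite_setOf_isRoot hPm0).subset (fun x hx => hx.1)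
  set V : Set ℝ := Bᶜ ∩ ⋂ k ∈ Finset.range n, {x : ℝ | SH c n (k+1) x ≠ mm k} with hVdef
  have hVopen : IsOpen V := by
    apply IsOpen.inter hBfin.isClosed.isOpen_compl
    apply isOpen_biInter_finset
    intro k _
    exact isOpen_compl_singleton.preimage (SH_cont c n (k+1))
  have hζV : ζ ∈ V := by
    constructor
    · intro hx; exact hx.2 rfl
    · simp only [Set.mem_iInter]
      intro k _
      exact hmζ k
  obtain ⟨ε, hε, hball⟩ := Metric.isOpen_iff.mp hVopen ζ hζV
  obtain ⟨r1, hr1a, hr1b⟩ := exists_rat_btwn (show ζ - ε < ζ by linarith)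
  obtain ⟨r2, hr2a, hr2b⟩ := exists_rat_btwn (show ζ < ζ + ε by linarith)
  have hIV : ∀ s : ℝ, (r1:ℝ) < s → s < (r2:ℝ) → s ∈ V := by
    intro s h1 h2
    apply hball
    rw [Metric.mem_ball, Real.dist_eq, abs_sub_lt_iff]
    constructor <;> linarith
  -- the configuration
  set stepAux : ℕ → Set (ESp 2) := fun k =>
    lift1Aux (mm k * ζ) ∪ muldivAux (SH c n (k+1) ζ) (mm k * ζ) (mm k) ∪
      addAux (c k) (ζ * SH c n (k+1) ζ) with hstepdef
  set CC : Set (ESp 2) := Qsq ∪ ((⋃ k ∈ Finset.range (n+1), intAux (P.coeff k)) ∪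
    ratAux r1 ∪ ratAux r2 ∪ {pt ζ 0} ∪ addAux ζ ζ ∪ ⋃ k ∈ Finset.range n, stepAux k)
    with hCCdef
  have hQC : Qsq ⊆ CC := Set.subset_union_left
  have memInt : ∀ k, k ∈ Finset.range (n+1) → intAux (P.coeff k) ⊆ CC := by
    intro k hk x hx
    exact Or.inr (Or.inl (Or.inl (Or.inl (Or.inl (Or.inl
      (Set.mem_biUnion hk hx))))))
  have memR1 : ratAux r1 ⊆ CC := fun x hx =>
    Or.inr (Or.inl (Or.inl (Or.inl (Or.inl (Or.inr hx)))))
  have memR2 : ratAux r2 ⊆ CC := fun x hx =>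
    Or.inr (Or.inl (Or.inl (Or.inl (Or.inr hx))))
  have memζ : pt ζ 0 ∈ CC := Or.inr (Or.inl (Or.inl (Or.inr rfl)))
  have memAdd : addAux ζ ζ ⊆ CC := fun x hx => Or.inr (Or.inl (Or.inr hx))
  have memStep : ∀ k, k ∈ Finset.range n → stepAux k ⊆ CC := by
    intro k hk x hx
    exact Or.inr (Or.inr (Set.mem_biUnion hk hx))
  have hfin : CC.Finite := by
    rw [hCCdef]
    refine Qsq_finite.union ?_
    refine (((((((Finset.range (n+1)).finite_toSet.biUnion
      (fun k _ => intAux_finite _)).union (ratAux_finite _)).union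
      (ratAux_finite _)).union (Set.finite_singleton _)).union
      (addAux_finite _ _)).union ((Finset.range n).finite_toSet.biUnion
      (fun k _ => (lift1Aux_finite _).union ?_ |>.union (addAux_finite _ _))))
    exact (muldivAux_finite _ _ _)
  refine ⟨CC, hfin, ?_, hQC, hQC, ?_⟩
  · rw [smul_e1]; exact memζ
  intro R' φ hLE hQfix
  have g00 : pt 0 0 ∈ Qsq := grid_mem (Or.inl rfl) (Or.inl rfl)
  have g10 : pt 1 0 ∈ Qsq := grid_mem (Or.inr (Or.inl rfl)) (Or.inl rfl)
  obtain ⟨t, ht⟩ : ∃ s : ℝ, φ (pt ζ 0) = pt s 0 := by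
    obtain ⟨k, hk⟩ := force1 hLE (hQC g00) (hQC g10) memζ
      (by intro e; simpa [pt] using congrArg (fun v : ESp 2 => v 0) e)
      ⟨ζ, by rw [ptcalc0]; exact pt_eq (by ring) (by ring)⟩
    refine ⟨k, ?_⟩
    rw [hk, hQfix _ g00, hQfix _ g10, ptcalc0]
    exact pt_eq (by ring) (by ring)
  have hbase : Fpt CC φ (pt ζ 0) (pt t 0) := ⟨memζ, ht⟩
  obtain ⟨hr1F, hswR1⟩ := rat_forced hLE hQfix hQC r1 memR1
  obtain ⟨hr2F, hswR2⟩ := rat_forced hLE hQfix hQC r2 memR2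
  have htlo : (r1:ℝ) < t := by
    have h := order_lower hLE hr1F.1 hr2F.1 memζ hr1F.2 hr2F.2 rfl rfl ht
      (((r1:ℝ) + ζ)/2) (by show (r1:ℝ) < _; linarith) (by show _ < ζ; linarith)
      (by show _ < (r2:ℝ); linarith)
    exact h
  have hthi : t < (r2:ℝ) := by
    have h := order_upper hLE hr1F.1 hr2F.1 memζ hr1F.2 hr2F.2 rfl rfl ht
      ((ζ + (r2:ℝ))/2) (by show (r1:ℝ) < _; linarith) (by show ζ < _; linarith)
      (by show _ < (r2:ℝ); linarith)
    exact h
  have htV := hIV t htlo hthi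
  have htB : t ∉ B := htV.1
  have htk : ∀ k, k < n → SH c n (k+1) t ≠ mm k := by
    have h2 := htV.2
    simp only [Set.mem_iInter] at h2
    intro k hk
    exact h2 k (Finset.mem_range.mpr hk)
  have main : ∀ j, j ≤ n → Fpt CC φ (pt (SH c n (n-j) ζ) 0) (pt (SH c n (n-j) t) 0) ∧
      (∀ k, n - j ≤ k → k < n → ∀ x ∈ stepAux k, ∃ y, Fpt CC φ x y ∧ (t = ζ → y = x)) := by
    intro j
    induction j with
    | zero =>
      intro _
      constructor
      · have hcn := (int_forced hLE hQfix hQC (P.coeff n)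
          (memInt n (Finset.mem_range.mpr (Nat.lt_succ_self n)))).1
        have e1 : SH c n (n-0) ζ = c n := by rw [Nat.sub_zero, SH_last]
        have e2 : SH c n (n-0) t = c n := by rw [Nat.sub_zero, SH_last]
        exact fpt_rw (fpt_rwx hcn (pt_eq e1.symm rfl)) (pt_eq e2.symm rfl)
      · intro k hk hk' x _
        exact absurd hk' (by omega)
    | succ j ih =>
      intro hj
      obtain ⟨hprev, hsweep⟩ := ih (by omega)
      set k := n - (j+1) with hkdef
      have hk : k < n := by omega
      have hk1 : n - j = k + 1 := by omega
      rw [hk1] at hprev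
      have hv0 : Fpt CC φ (pt (mm k * ζ) 0) (pt (mm k * t) 0) := by
        rcases hm12 k with h | h
        · rw [h, one_mul, one_mul]; exact hbase
        · have hdbl := (add_forced hLE hQfix hQC hbase hbase memAdd).1
          rw [h]
          exact fpt_rw (fpt_rwx hdbl (pt_eq (two_mul ζ).symm rfl)) (pt_eq (two_mul t).symm rfl)
      have memLift : lift1Aux (mm k * ζ) ⊆ CC := fun x hx =>
        memStep k (Finset.mem_range.mpr hk) (Or.inl (Or.inl hx))
      obtain ⟨hvL1, hswLift⟩ := lift1_forced hLE hQfix hQC hv0 memLift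
      have hcen : Fpt CC φ (pt (mm k) 1) (pt (mm k) 1) := by
        rcases hm12 k with h | h <;> rw [h]
        · exact grid_fpt hQfix hQC (Or.inr (Or.inl rfl)) (Or.inr (Or.inl rfl))
        · exact grid_fpt hQfix hQC (Or.inr (Or.inr rfl)) (Or.inr (Or.inl rfl))
      have memMul : muldivAux (SH c n (k+1) ζ) (mm k * ζ) (mm k) ⊆ CC := fun x hx =>
        memStep k (Finset.mem_range.mpr hk) (Or.inl (Or.inr hx))
      obtain ⟨hprodRaw, hinvRaw⟩ := muldiv_forced hLE hQfix hQC hprev hvL1 hcen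
        (hmζ k) (htk k hk) (hm0 k) (hm0 k) memMul
      have eprod : ∀ s w : ℝ, w * (mm k * s) / mm k = s * w := by
        intro s w
        have := hm0 k
        field_simp
      have hprod : Fpt CC φ (pt (ζ * SH c n (k+1) ζ) 0) (pt (t * SH c n (k+1) t) 0) :=
        fpt_rw (fpt_rwx hprodRaw (pt_eq (eprod ζ _) rfl)) (pt_eq (eprod t _) rfl)
      have memAddk : addAux (c k) (ζ * SH c n (k+1) ζ) ⊆ CC := fun x hx =>
        memStep k (Finset.mem_range.mpr hk) (Or.inr hx)
      have hck := (int_forced hLE hQfix hQC (P.coeff k)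
        (memInt k (Finset.mem_range.mpr (by omega)))).1
      obtain ⟨hsum, hswAdd⟩ := add_forced hLE hQfix hQC hck hprod memAddk
      constructor
      · have e1 : SH c n k ζ = c k + ζ * SH c n (k+1) ζ := SH_step c hk ζ
        have e2 : SH c n k t = c k + t * SH c n (k+1) t := SH_step c hk t
        exact fpt_rw (fpt_rwx hsum (pt_eq e1.symm rfl)) (pt_eq e2.symm rfl)
      · intro k' hlo hhi x hx
        by_cases hkk : k' = k
        · subst hkk
          simp only [hstepdef] at hx
          rcases hx with (hx | hx) | hx
          · obtain ⟨y, hy, hcond⟩ := hswLift x hx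
            exact ⟨y, hy, fun e => hcond (by rw [e])⟩
          · simp only [muldivAux, Set.mem_insert_iff, Set.mem_singleton_iff] at hx
            rcases hx with rfl | rfl
            · exact ⟨_, hinvRaw, fun e => by rw [e]⟩
            · exact ⟨_, hprodRaw, fun e => by rw [e]⟩
          · obtain ⟨y, hy, hcond⟩ := hswAdd x hx
            exact ⟨y, hy, fun e => hcond rfl (by rw [e])⟩
        · exact hsweep k' (by omega) hhi x hx
  obtain ⟨hfinal, hsweepAll⟩ := main n le_rfl
  rw [Nat.sub_self] at hfinal
  have hS0ζ : SH c n 0 ζ = 0 := by rw [hSeval]; exact hPmζ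
  have h00 : φ (pt 0 0) = pt 0 0 := hQfix _ g00
  have hSt0 : SH c n 0 t = 0 := by
    have hx := hfinal.2
    rw [hS0ζ] at hx
    have hcf := congrArg (fun v : ESp 2 => v 0) ((h00.symm.trans hx))
    simpa [pt] using hcf.symm
  have htζ : t = ζ := by
    by_contra hne
    exact htB ⟨by rw [← hSeval]; exact hSt0, hne⟩
  subst htζ
  intro x hx
  rcases hx with hx | hx
  · exact hQfix x hx
  rcases hx with ((((hx | hx) | hx) | hx) | hx) | hx
  · obtain ⟨k, hk, hxk⟩ := Set.mem_iUnion₂.mp hx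
    exact (int_forced hLE hQfix hQC (P.coeff k) (memInt k hk)).2 x hxk
  · exact hswR1 x hx
  · exact hswR2 x hx
  · rw [Set.mem_singleton_iff] at hx
    rw [hx]
    exact ht
  · obtain ⟨y, hy, hcond⟩ := (add_forced hLE hQfix hQC hbase hbase memAdd).2 x hx
    rw [hy.2, hcond rfl rfl]
  · obtain ⟨k, hk, hxk⟩ := Set.mem_iUnion₂.mp hx
    obtain ⟨y, hy, hcond⟩ := hsweepAll k (by omega) (Finset.mem_range.mp hk) x hxk
    rw [hy.2, hcond rfl]
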